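/- arXiv:1910.09662 — 3 statements merged into one kernel-verified Lean document; each statement's English description precedes it below -/
import Mathlib

section
/- For independent standard normal random variables Z₁, Z₂ and any ε ∈ (0,1], setting M = max(1, ε⁻¹·(log(1/ε))^{1/2}), the probability P(√M·|Z₁| ≤ |Z₂| + (M+1)·ε) is at most K·ε^{1/2}·(log(1/ε))^{1/4} for some absolute constant K > 0. -/
open MeasureTheory ProbabilityTheory

lemma grac_aux_integral (T : ℝ) :
    ∫ x in Set.Ioi T, x * Real.exp (-(1/2) * x ^ 2) = Real.exp (-(1/2) * T ^ 2) := by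
  have hderiv : ∀ x ∈ Set.Ici T,
      HasDerivAt (fun y : ℝ => -Real.exp (-(1/2) * y ^ 2))
        (x * Real.exp (-(1/2) * x ^ 2)) x := by
    intro x _
    have h1 : HasDerivAt (fun y : ℝ => -(1/2) * y ^ 2) (-(1/2) * (2 * x)) x :=
      (hasDerivAt_pow 2 x).const_mul _ |>.congr_deriv (by ring)
    have h2 := (h1.exp).neg
    exact h2.congr_deriv (by ring)
  have hint : IntegrableOn (fun x : ℝ => x * Real.exp (-(1/2) * x ^ 2)) (Set.Ioi T) :=
    (integrable_mul_exp_neg_mul_sq (by norm_num : (0:ℝ) < 1/2)).integrableOn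
  have htend : Filter.Tendsto (fun y : ℝ => -Real.exp (-(1/2) * y ^ 2))
      Filter.atTop (nhds 0) := by
    rw [show (0:ℝ) = -0 by ring]
    refine Filter.Tendsto.neg ?_
    have h3 : Filter.Tendsto (fun y : ℝ => -(1/2) * y ^ 2) Filter.atTop Filter.atBot := by
      refine Filter.Tendsto.const_mul_atTop_of_neg (by norm_num) ?_
      exact Filter.tendsto_pow_atTop (by norm_num)
    exact Real.tendsto_exp_atBot.comp h3
  have := integral_Ioi_of_hasDerivAt_of_tendsto' hderiv hint htend
  rw [this]
  ring

lemma grac_pdf_eq (x : ℝ) :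
    gaussianPDFReal 0 1 x = (Real.sqrt (2 * Real.pi))⁻¹ * Real.exp (-(1/2) * x ^ 2) := by
  simp only [gaussianPDFReal, NNReal.coe_one, mul_one, sub_zero]
  ring_nf

lemma grac_sqrt_two_pi : (2:ℝ) ≤ Real.sqrt (2 * Real.pi) := by
  have h : (4:ℝ) ≤ 2 * Real.pi := by nlinarith [Real.pi_gt_three]
  nlinarith [Real.sq_sqrt (by positivity : (0:ℝ) ≤ 2 * Real.pi),
    Real.sqrt_nonneg (2 * Real.pi)]

lemma grac_Ici (T : ℝ) (hT : 1 ≤ T) :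
    gaussianReal 0 1 (Set.Ici T) ≤ ENNReal.ofReal (2⁻¹ * Real.exp (-(1/2) * T ^ 2)) := by
  rw [gaussianReal_apply 0 one_ne_zero]
  have hmono : ∫⁻ x in Set.Ici T, gaussianPDF 0 1 x
      ≤ ∫⁻ x in Set.Ici T, ENNReal.ofReal (2⁻¹ * (x * Real.exp (-(1/2) * x ^ 2))) := by
    refine setLIntegral_mono (by measurability) ?_
    intro x hx
    have hx1 : (1:ℝ) ≤ x := le_trans hT hx
    rw [gaussianPDF, grac_pdf_eq]
    refine ENNReal.ofReal_le_ofReal ?_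
    have hc : (Real.sqrt (2 * Real.pi))⁻¹ ≤ 2⁻¹ := by
      refine inv_anti₀ (by norm_num) grac_sqrt_two_pi
    have he : (0:ℝ) < Real.exp (-(1/2) * x ^ 2) := Real.exp_pos _
    nlinarith
  refine hmono.trans ?_
  have hint : IntegrableOn (fun x : ℝ => 2⁻¹ * (x * Real.exp (-(1/2) * x ^ 2)))
      (Set.Ici T) := by
    rw [integrableOn_Ici_iff_integrableOn_Ioi]
    exact ((integrable_mul_exp_neg_mul_sq (by norm_num : (0:ℝ) < 1/2)).integrableOn).const_mul _
  have hnn : 0 ≤ᵐ[volume.restrict (Set.Ici T)]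
      fun x : ℝ => 2⁻¹ * (x * Real.exp (-(1/2) * x ^ 2)) := by
    filter_upwards [ae_restrict_mem measurableSet_Ici] with x hx
    have hx1 : (1:ℝ) ≤ x := le_trans hT hx
    positivity
  rw [← ofReal_integral_eq_lintegral_ofReal hint hnn]
  refine ENNReal.ofReal_le_ofReal ?_
  rw [MeasureTheory.integral_Ici_eq_integral_Ioi, integral_const_mul, grac_aux_integral]

lemma grac_tail (T : ℝ) (hT : 1 ≤ T) :
    gaussianReal 0 1 {x : ℝ | T ≤ |x|} ≤ ENNReal.ofReal (Real.exp (-(1/2) * T ^ 2)) := by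
  have hsub : {x : ℝ | T ≤ |x|} ⊆ Set.Iic (-T) ∪ Set.Ici T := by
    intro x hx
    simp only [Set.mem_setOf_eq] at hx
    rcases le_abs.mp hx with h | h
    · exact Or.inr h
    · exact Or.inl (by simp only [Set.mem_Iic]; linarith)
  have hIic : gaussianReal 0 1 (Set.Iic (-T)) = gaussianReal 0 1 (Set.Ici T) := by
    have hmap := gaussianReal_map_const_mul (μ := 0) (v := 1) (-1)
    have h1 : (⟨(-1:ℝ)^2, sq_nonneg _⟩ : NNReal) * 1 = 1 := by
      ext; norm_num
    replace hmap : Measure.map (fun x : ℝ => -1 * x) (gaussianReal 0 1) = gaussianReal 0 1 := by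
      rw [hmap]
      congr 1
      ring
    have h2 : Set.Iic (-T) = (fun x : ℝ => -1 * x) ⁻¹' Set.Ici T := by
      ext x
      simp only [Set.mem_Iic, Set.mem_preimage, Set.mem_Ici, neg_mul, one_mul]
      constructor <;> intro h <;> linarith
    rw [h2, ← Measure.map_apply (show Measurable fun x : ℝ => -1 * x by fun_prop) measurableSet_Ici, hmap]
  calc gaussianReal 0 1 {x : ℝ | T ≤ |x|}
      ≤ gaussianReal 0 1 (Set.Iic (-T) ∪ Set.Ici T) := measure_mono hsub
    _ ≤ gaussianReal 0 1 (Set.Iic (-T)) + gaussianReal 0 1 (Set.Ici T) :=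
        measure_union_le _ _
    _ = gaussianReal 0 1 (Set.Ici T) + gaussianReal 0 1 (Set.Ici T) := by rw [hIic]
    _ ≤ ENNReal.ofReal (2⁻¹ * Real.exp (-(1/2) * T ^ 2))
        + ENNReal.ofReal (2⁻¹ * Real.exp (-(1/2) * T ^ 2)) :=
        add_le_add (grac_Ici T hT) (grac_Ici T hT)
    _ = ENNReal.ofReal (Real.exp (-(1/2) * T ^ 2)) := by
        rw [← ENNReal.ofReal_add (by positivity) (by positivity)]
        congr 1
        ring

lemma grac_ball (a : ℝ) (ha : 0 ≤ a) :
    gaussianReal 0 1 {x : ℝ | |x| ≤ a} ≤ ENNReal.ofReal a := by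
  have hset : {x : ℝ | |x| ≤ a} = Set.Icc (-a) a := by
    ext x; simp [abs_le]
  rw [hset, gaussianReal_apply 0 one_ne_zero]
  have hmono : ∫⁻ x in Set.Icc (-a) a, gaussianPDF 0 1 x
      ≤ ∫⁻ _ in Set.Icc (-a) a, ENNReal.ofReal 2⁻¹ := by
    refine setLIntegral_mono measurable_const ?_
    intro x _
    rw [gaussianPDF, grac_pdf_eq]
    refine ENNReal.ofReal_le_ofReal ?_
    have hc : (Real.sqrt (2 * Real.pi))⁻¹ ≤ 2⁻¹ :=
      inv_anti₀ (by norm_num) grac_sqrt_two_pi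
    have he : Real.exp (-(1/2) * x ^ 2) ≤ 1 :=
      Real.exp_le_one_iff.mpr (by nlinarith [sq_nonneg x])
    nlinarith [Real.exp_pos (-(1/2) * x ^ 2), Real.sqrt_nonneg (2 * Real.pi)]
  refine hmono.trans ?_
  rw [setLIntegral_const, Real.volume_Icc]
  rw [← ENNReal.ofReal_mul (by norm_num)]
  refine ENNReal.ofReal_le_ofReal ?_
  nlinarith

set_option maxHeartbeats 1000000 in
/-- For independent standard normals `Z₁, Z₂` and `ε ∈ (0,1]`, with
`M = max(1, ε⁻¹ (log₊(1/ε))^{1/2})`, one has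
`P(√M |Z₁| ≤ |Z₂| + (M+1) ε) ≤ K ε^{1/2} (log₊(1/ε))^{1/4}` for an absolute `K > 0`. -/
theorem gaussian_ratio_anti_concentration {Ω : Type} [MeasureSpace Ω]
    [IsProbabilityMeasure (ℙ : Measure Ω)]
    (Z₁ Z₂ : Ω → ℝ)
    (h₁ : Measure.map Z₁ ℙ = gaussianReal 0 1)
    (h₂ : Measure.map Z₂ ℙ = gaussianReal 0 1)
    (hind : IndepFun Z₁ Z₂ ℙ) :
    ∃ K : ℝ, 0 < K ∧ ∀ ε : ℝ, ε ∈ Set.Ioc (0 : ℝ) 1 →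
      ℙ {ω | Real.sqrt (max 1 (ε⁻¹ * (max 1 (Real.log (1 / ε))) ^ ((1 : ℝ) / 2))) * |Z₁ ω| ≤
            |Z₂ ω| + (max 1 (ε⁻¹ * (max 1 (Real.log (1 / ε))) ^ ((1 : ℝ) / 2)) + 1) * ε} ≤
        ENNReal.ofReal (K * ε ^ ((1 : ℝ) / 2) * (max 1 (Real.log (1 / ε))) ^ ((1 : ℝ) / 4)) := by
  have hZ₁m : AEMeasurable Z₁ ℙ := by
    by_contra h
    rw [Measure.map_of_not_aemeasurable h] at h₁
    have := measure_univ (μ := gaussianReal 0 1)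
    rw [← h₁] at this
    simp at this
  have hZ₂m : AEMeasurable Z₂ ℙ := by
    by_contra h
    rw [Measure.map_of_not_aemeasurable h] at h₂
    have := measure_univ (μ := gaussianReal 0 1)
    rw [← h₂] at this
    simp at this
  refine ⟨5, by norm_num, ?_⟩
  intro ε hε
  obtain ⟨hε0, hε1⟩ := hε
  set L := max 1 (Real.log (1 / ε)) with hLdef
  have hL1 : (1:ℝ) ≤ L := le_max_left _ _
  set l := L ^ ((1:ℝ)/4) with hldef
  have hl1 : (1:ℝ) ≤ l := Real.one_le_rpow hL1 (by norm_num)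
  have hl0 : (0:ℝ) < l := lt_of_lt_of_le one_pos hl1
  set s := ε ^ ((1:ℝ)/2) with hsdef
  have hs0 : (0:ℝ) < s := Real.rpow_pos_of_pos hε0 _
  have hs1 : s ≤ 1 := Real.rpow_le_one hε0.le hε1 (by norm_num)
  have hs2 : s * s = ε := by
    rw [hsdef, ← Real.rpow_add hε0]
    norm_num
  have hl2 : l * l = L ^ ((1:ℝ)/2) := by
    rw [hldef, ← Real.rpow_add (lt_of_lt_of_le one_pos hL1)]
    norm_num
  have hMs : ε⁻¹ * L ^ ((1:ℝ)/2) = (l * l) / (s * s) := by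
    rw [hl2, hs2, inv_mul_eq_div]
  have hM : max 1 (ε⁻¹ * L ^ ((1:ℝ)/2)) = ε⁻¹ * L ^ ((1:ℝ)/2) := by
    refine max_eq_right ?_
    rw [hMs]
    rw [le_div_iff₀ (by positivity), one_mul]
    nlinarith
  have hsqrtM : Real.sqrt (ε⁻¹ * L ^ ((1:ℝ)/2)) = l / s := by
    rw [hMs, show (l * l) / (s * s) = (l / s) * (l / s) by ring,
      Real.sqrt_mul_self (by positivity)]
  set T := Real.sqrt (2 * L) with hTdef
  have hT1 : (1:ℝ) ≤ T := by
    rw [hTdef, show (1:ℝ) = Real.sqrt 1 from Real.sqrt_one.symm]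
    exact Real.sqrt_le_sqrt (by linarith)
  have hTsq : T ^ 2 = 2 * L := Real.sq_sqrt (by linarith)
  have hTexp : Real.exp (-(1/2) * T ^ 2) ≤ ε := by
    rw [hTsq, show -(1/2) * (2 * L) = -L by ring]
    have hlog : -L ≤ Real.log ε := by
      have h : Real.log (1 / ε) ≤ L := le_max_right _ _
      have h2 : Real.log (1 / ε) = -Real.log ε := by rw [one_div, Real.log_inv]
      linarith
    calc Real.exp (-L) ≤ Real.exp (Real.log ε) := Real.exp_le_exp.mpr hlog
      _ = ε := Real.exp_log hε0
  have hTle : T ≤ (3/2) * (l * l) := by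
    rw [hl2, hTdef, Real.sqrt_mul (by norm_num) L, Real.sqrt_eq_rpow L]
    have h2 : Real.sqrt 2 ≤ 3/2 := by
      nlinarith [Real.sq_sqrt (by norm_num : (0:ℝ) ≤ 2), Real.sqrt_nonneg 2]
    have hLp : (0:ℝ) < L ^ ((1:ℝ)/2) := by positivity
    nlinarith
  set a := (T + (ε⁻¹ * L ^ ((1:ℝ)/2) + 1) * ε) * (s / l) with hadef
  have ha0 : (0:ℝ) ≤ a := by
    have : (0:ℝ) ≤ ε⁻¹ * L ^ ((1:ℝ)/2) := by positivity
    have hT0 : (0:ℝ) ≤ T := by linarith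
    positivity
  -- the key real inequality
  have hMε : (ε⁻¹ * L ^ ((1:ℝ)/2)) * ε = l * l := by
    rw [hMs, ← hs2]
    field_simp
  have ha_eq : a = (T + (l * l + ε)) * (s / l) := by
    rw [hadef]
    congr 2
    rw [add_mul, hMε, one_mul]
  have hnum : T + (l * l + ε) ≤ (7/2) * (l * l) := by
    have hε_le : ε ≤ l * l := by nlinarith
    linarith
  have ha_le : a ≤ 4 * (s * l) :=
    calc a = (T + (l * l + ε)) * (s / l) := ha_eq
      _ ≤ ((7/2) * (l * l)) * (s / l) :=
          mul_le_mul_of_nonneg_right hnum (by positivity)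
      _ = (7/2) * (s * l) := by
          field_simp
      _ ≤ 4 * (s * l) := by nlinarith
  -- rewrite the event
  rw [hM, hsqrtM]
  have hsub : {ω | (l / s) * |Z₁ ω| ≤ |Z₂ ω| + (ε⁻¹ * L ^ ((1:ℝ)/2) + 1) * ε}
      ⊆ {ω | T ≤ |Z₂ ω|} ∪ {ω | |Z₁ ω| ≤ a} := by
    intro ω hω
    simp only [Set.mem_setOf_eq, Set.mem_union]
    by_cases hc : T ≤ |Z₂ ω|
    · exact Or.inl hc
    · push_neg at hc
      refine Or.inr ?_
      have h1 : (l / s) * |Z₁ ω| ≤ T + (ε⁻¹ * L ^ ((1:ℝ)/2) + 1) * ε := by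
        have := hω
        simp only [Set.mem_setOf_eq] at this
        linarith
      have hls : (0:ℝ) < l / s := by positivity
      calc |Z₁ ω| = ((l / s) * |Z₁ ω|) * (s / l) := by field_simp
        _ ≤ (T + (ε⁻¹ * L ^ ((1:ℝ)/2) + 1) * ε) * (s / l) :=
            mul_le_mul_of_nonneg_right h1 (by positivity)
  have hA : ℙ {ω | T ≤ |Z₂ ω|} = gaussianReal 0 1 {x : ℝ | T ≤ |x|} := by
    rw [← h₂, Measure.map_apply_of_aemeasurable hZ₂m
      (measurableSet_le measurable_const measurable_abs)]
    rfl
  have hB : ℙ {ω | |Z₁ ω| ≤ a} = gaussianReal 0 1 {x : ℝ | |x| ≤ a} := by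
    rw [← h₁, Measure.map_apply_of_aemeasurable hZ₁m
      (measurableSet_le measurable_abs measurable_const)]
    rfl
  calc ℙ {ω | (l / s) * |Z₁ ω| ≤ |Z₂ ω| + (ε⁻¹ * L ^ ((1:ℝ)/2) + 1) * ε}
      ≤ ℙ ({ω | T ≤ |Z₂ ω|} ∪ {ω | |Z₁ ω| ≤ a}) := measure_mono hsub
    _ ≤ ℙ {ω | T ≤ |Z₂ ω|} + ℙ {ω | |Z₁ ω| ≤ a} := measure_union_le _ _
    _ = gaussianReal 0 1 {x : ℝ | T ≤ |x|} + gaussianReal 0 1 {x : ℝ | |x| ≤ a} := by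
        rw [hA, hB]
    _ ≤ ENNReal.ofReal (Real.exp (-(1/2) * T ^ 2)) + ENNReal.ofReal a :=
        add_le_add (grac_tail T hT1) (grac_ball a ha0)
    _ ≤ ENNReal.ofReal (5 * s * l) := by
        rw [← ENNReal.ofReal_add (by positivity) ha0]
        refine ENNReal.ofReal_le_ofReal ?_
        have hε_le_sl : ε ≤ s * l := by nlinarith
        nlinarith
end

section
/- For all real μ and y with y ≥ 0: if y + μ ≤ 1 then e^{2μy}·(1 − Φ(y + μ)) ≤ e^{1/2}, and if y + μ > 1 then e^{2μy}·(1 − Φ(y + μ)) ≤ (2π)^{−1/2}·e^{−(y−μ)²/2}. -/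
open Real MeasureTheory Set Filter

noncomputable def stdNormalCDF (x : ℝ) : ℝ :=
  ∫ t in Set.Iic x, Real.exp (-t ^ 2 / 2) / Real.sqrt (2 * Real.pi)

lemma phi_eq : (fun t : ℝ => Real.exp (-t ^ 2 / 2) / Real.sqrt (2 * Real.pi)) =
    fun t : ℝ => Real.exp (-(1/2) * t ^ 2) / Real.sqrt (2 * Real.pi) := by
  funext t; ring_nf

lemma phi_integrable : Integrable (fun t : ℝ => Real.exp (-t ^ 2 / 2) / Real.sqrt (2 * Real.pi)) := by
  rw [phi_eq]
  exact (integrable_exp_neg_mul_sq (by norm_num)).div_const _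

lemma phi_total : ∫ t : ℝ, Real.exp (-t ^ 2 / 2) / Real.sqrt (2 * Real.pi) = 1 := by
  rw [phi_eq]
  rw [integral_div, integral_gaussian]
  rw [show Real.pi / (1/2) = 2 * Real.pi by ring]
  exact div_self (by positivity)

lemma tail_eq (x : ℝ) : 1 - stdNormalCDF x =
    ∫ t in Set.Ioi x, Real.exp (-t ^ 2 / 2) / Real.sqrt (2 * Real.pi) := by
  have := intervalIntegral.integral_Iic_add_Ioi (μ := volume) (b := x)
    phi_integrable.integrableOn phi_integrable.integrableOn
  rw [phi_total] at this
  unfold stdNormalCDF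
  linarith

lemma cdf_nonneg (x : ℝ) : 0 ≤ stdNormalCDF x :=
  integral_nonneg fun t => by positivity

lemma tail_nonneg (x : ℝ) : 0 ≤ 1 - stdNormalCDF x := by
  rw [tail_eq]
  exact integral_nonneg fun t => by positivity

lemma tail_bound {x : ℝ} (hx : 1 ≤ x) :
    1 - stdNormalCDF x ≤ Real.exp (-x ^ 2 / 2) / Real.sqrt (2 * Real.pi) := by
  rw [tail_eq]
  have key : ∫ t in Set.Ioi x, t * Real.exp (-(1/2) * t ^ 2)
      = Real.exp (-(1/2) * x ^ 2) := by
    have := integral_Ioi_of_hasDerivAt_of_tendsto (a := x)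
      (f := fun t : ℝ => -Real.exp (-(1/2) * t ^ 2))
      (f' := fun t : ℝ => t * Real.exp (-(1/2) * t ^ 2))
      (m := 0)
      ((Continuous.neg (by continuity)).continuousWithinAt)
      (fun t ht => by
        have : HasDerivAt (fun t : ℝ => -(1/2) * t ^ 2) (-t) t := by
          simpa using ((hasDerivAt_pow 2 t).const_mul (-(1/2):ℝ))
        have := (this.exp).neg
        convert this using 1
        · rfl
        · ring)
      ((integrable_mul_exp_neg_mul_sq (by norm_num : (0:ℝ) < 1/2)).integrableOn)
      ?_
    · simpa using this
    · have : Tendsto (fun t : ℝ => Real.exp (-(1/2) * t ^ 2)) atTop (nhds 0) := by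
        have h1 : Tendsto (fun t : ℝ => -(1/2) * t ^ 2) atTop atBot := by
          apply Tendsto.const_mul_atTop_of_neg (by norm_num)
          exact tendsto_pow_atTop (by norm_num)
        exact Real.tendsto_exp_atBot.comp h1
      simpa using this.neg
  have mono : ∫ t in Set.Ioi x, Real.exp (-t ^ 2 / 2) ≤
      ∫ t in Set.Ioi x, t * Real.exp (-(1/2) * t ^ 2) := by
    apply setIntegral_mono_on
    · exact ((integrable_exp_neg_mul_sq (b := 1/2) (by norm_num)).integrableOn).congr_fun
        (fun t _ => by ring_nf) measurableSet_Ioi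
    · exact (integrable_mul_exp_neg_mul_sq (by norm_num : (0:ℝ) < 1/2)).integrableOn
    · exact measurableSet_Ioi
    · intro t ht
      rw [Set.mem_Ioi] at ht
      have h1 : (1:ℝ) ≤ t := le_of_lt (lt_of_le_of_lt hx ht)
      rw [show -t^2/2 = -(1/2)*t^2 by ring]
      nlinarith [Real.exp_pos (-(1/2) * t^2)]
  rw [integral_div]
  have final : ∫ t in Set.Ioi x, Real.exp (-t ^ 2 / 2) ≤ Real.exp (-x ^ 2 / 2) := by
    rw [show -x^2/2 = -(1/2)*x^2 by ring, ← key]; exact mono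
  gcongr

/-- For `y ≥ 0`: if `y + μ ≤ 1` then `e^{2μy}(1 - Φ(y+μ)) ≤ e^{1/2}`, and if `y + μ > 1`
then `e^{2μy}(1 - Φ(y+μ)) ≤ (2π)^{-1/2} e^{-(y-μ)²/2}`. -/
theorem exp_mul_gaussian_tail_bound (μ y : ℝ) (hy : 0 ≤ y) :
    (y + μ ≤ 1 → Real.exp (2 * μ * y) * (1 - stdNormalCDF (y + μ)) ≤ Real.exp (1 / 2)) ∧
    (1 < y + μ → Real.exp (2 * μ * y) * (1 - stdNormalCDF (y + μ)) ≤
      (Real.sqrt (2 * Real.pi))⁻¹ * Real.exp (-(y - μ) ^ 2 / 2)) := by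
  constructor
  · intro h
    have h1 : 1 - stdNormalCDF (y + μ) ≤ 1 := by
      have := cdf_nonneg (y + μ); linarith
    have h2 : Real.exp (2 * μ * y) * (1 - stdNormalCDF (y + μ)) ≤ Real.exp (2 * μ * y) := by
      nlinarith [Real.exp_pos (2*μ*y), tail_nonneg (y+μ)]
    refine h2.trans (Real.exp_le_exp.mpr ?_)
    nlinarith [sq_nonneg (2*y - 1), mul_nonneg hy (by linarith : (0:ℝ) ≤ 1 - y - μ)]
  · intro h
    have hb := tail_bound h.le
    have : Real.exp (2 * μ * y) * (1 - stdNormalCDF (y + μ)) ≤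
        Real.exp (2 * μ * y) * (Real.exp (-(y+μ) ^ 2 / 2) / Real.sqrt (2 * Real.pi)) :=
      mul_le_mul_of_nonneg_left hb (Real.exp_pos _).le
    refine this.trans_eq ?_
    rw [div_eq_inv_mul, ← mul_assoc, mul_comm (Real.exp (2*μ*y)),
      mul_assoc, ← Real.exp_add]
    ring_nf
end

section
/- Let y₁, …, y_n ∈ ℝ and let f̂ ∈ ℝⁿ be the minimizer of ∑_{i=1}^n (y_i − f_i)² over all nondecreasing vectors f (f₁ ≤ f₂ ≤ … ≤ f_n). Then for every index k, f̂_k = max_{i ≤ k} min_{j ≥ k} ( (y_i + y_{i+1} + … + y_j)/(j − i + 1) ). -/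
open Finset

/-- Expanding the sum of squares under an indicator perturbation. -/
private lemma isoreg_perturb_sum {n : ℕ} (y fhat : Fin n → ℝ) (s : Finset (Fin n)) (t : ℝ) :
    ∑ i, (y i - (fhat i + t * (if i ∈ s then (1:ℝ) else 0))) ^ 2
      = ∑ i, (y i - fhat i) ^ 2
        + (-(2*t) * ∑ i ∈ s, (y i - fhat i) + t^2 * s.card) := by
  have h : ∀ i : Fin n, (y i - (fhat i + t * (if i ∈ s then (1:ℝ) else 0))) ^ 2
      = (y i - fhat i) ^ 2 + (if i ∈ s then (-(2*t) * (y i - fhat i) + t^2) else 0) := by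
    intro i; split <;> ring
  rw [Finset.sum_congr rfl (fun i _ => h i), Finset.sum_add_distrib]
  congr 1
  rw [Fintype.sum_ite_mem, Finset.sum_add_distrib, ← Finset.mul_sum, Finset.sum_const,
    nsmul_eq_mul]
  ring

/-- The indicator perturbation is monotone when the cross condition holds. -/
private lemma isoreg_perturb_mono {n : ℕ} (fhat : Fin n → ℝ) (hmono : Monotone fhat)
    (s : Finset (Fin n)) (hs : ∀ ⦃a b : Fin n⦄, a ∈ s → a ≤ b → b ∈ s) (t : ℝ)
    (hcross : ∀ a ∉ s, ∀ b ∈ s, fhat a ≤ fhat b + t) :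
    Monotone (fun i => fhat i + t * (if i ∈ s then (1:ℝ) else 0)) := by
  intro a b hab
  by_cases ha : a ∈ s
  · have hb : b ∈ s := hs ha hab
    simp only [ha, hb, if_true]
    have := hmono hab; linarith
  · by_cases hb : b ∈ s
    · simp only [ha, hb, if_true, if_false]
      have := hcross a ha b hb; linarith
    · simp only [ha, hb, if_false]
      have := hmono hab; linarith

/-- Suffix (upper-set) sums of residuals of the isotonic LSE are nonpositive. -/
private lemma isoreg_key_le {n : ℕ} (y fhat : Fin n → ℝ) (hmono : Monotone fhat)
    (hmin : ∀ g : Fin n → ℝ, Monotone g →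
      ∑ i, (y i - fhat i) ^ 2 ≤ ∑ i, (y i - g i) ^ 2)
    (s : Finset (Fin n)) (hs : ∀ ⦃a b : Fin n⦄, a ∈ s → a ≤ b → b ∈ s) :
    ∑ i ∈ s, (y i - fhat i) ≤ 0 := by
  by_contra h
  push_neg at h
  set T := ∑ i ∈ s, (y i - fhat i) with hT
  have hsne : s.Nonempty := by
    rcases Finset.eq_empty_or_nonempty s with h0 | h0
    · rw [hT, h0] at h; simp at h
    · exact h0
  have hc : (0:ℝ) < (s.card : ℝ) := by exact_mod_cast Finset.card_pos.mpr hsne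
  set t := T / (s.card : ℝ) with ht
  have htpos : 0 < t := div_pos h hc
  have hcross : ∀ a ∉ s, ∀ b ∈ s, fhat a ≤ fhat b + t := by
    intro a ha b hb
    have hab : a ≤ b := by
      by_contra hba
      exact ha (hs hb (le_of_not_ge hba))
    have := hmono hab; linarith
  have hgm := isoreg_perturb_mono fhat hmono s hs t hcross
  have hineq := hmin _ hgm
  rw [isoreg_perturb_sum y fhat s t] at hineq
  have h2 : 0 ≤ -(2*t) * T + t^2 * (s.card : ℝ) := by linarith
  have h3 : -(2*t) * T + t^2 * (s.card : ℝ) = -(T^2 / (s.card : ℝ)) := by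
    rw [ht]; field_simp; ring
  rw [h3] at h2
  have h4 : 0 < T^2 / (s.card : ℝ) := div_pos (by positivity) hc
  linarith

/-- Upper-set sums of residuals are nonnegative when `fhat` strictly jumps into the set. -/
private lemma isoreg_key_ge {n : ℕ} (y fhat : Fin n → ℝ) (hmono : Monotone fhat)
    (hmin : ∀ g : Fin n → ℝ, Monotone g →
      ∑ i, (y i - fhat i) ^ 2 ≤ ∑ i, (y i - g i) ^ 2)
    (s : Finset (Fin n)) (hs : ∀ ⦃a b : Fin n⦄, a ∈ s → a ≤ b → b ∈ s)
    (hlt : ∀ a ∉ s, ∀ b ∈ s, fhat a < fhat b) :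
    0 ≤ ∑ i ∈ s, (y i - fhat i) := by
  by_contra h
  push_neg at h
  set T := ∑ i ∈ s, (y i - fhat i) with hT
  have hsne : s.Nonempty := by
    rcases Finset.eq_empty_or_nonempty s with h0 | h0
    · rw [hT, h0] at h; simp at h
    · exact h0
  have hc : (0:ℝ) < (s.card : ℝ) := by exact_mod_cast Finset.card_pos.mpr hsne
  -- choose a positive gap δ
  set δ : ℝ := if hcne : (sᶜ : Finset (Fin n)).Nonempty
      then s.inf' hsne fhat - (sᶜ).sup' hcne fhat else 1 with hδdef
  have hδpos : 0 < δ := by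
    rw [hδdef]
    split
    · rename_i hcne
      have : (sᶜ).sup' hcne fhat < s.inf' hsne fhat := by
        rw [Finset.sup'_lt_iff]
        intro a ha
        rw [Finset.lt_inf'_iff]
        intro b hb
        exact hlt a (Finset.mem_compl.mp ha) b hb
      linarith
    · norm_num
  set t : ℝ := max (-δ) (T / (s.card : ℝ)) with htdef
  have htneg : t < 0 := by
    apply max_lt
    · linarith
    · exact div_neg_of_neg_of_pos h hc
  have htge : T / (s.card : ℝ) ≤ t := le_max_right _ _
  have htδ : -δ ≤ t := le_max_left _ _
  have hcross : ∀ a ∉ s, ∀ b ∈ s, fhat a ≤ fhat b + t := by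
    intro a ha b hb
    have hcne : (sᶜ : Finset (Fin n)).Nonempty := ⟨a, Finset.mem_compl.mpr ha⟩
    have hδeq : δ = s.inf' hsne fhat - (sᶜ).sup' hcne fhat := by
      rw [hδdef]; rw [dif_pos hcne]
    have h1 : fhat a ≤ (sᶜ).sup' hcne fhat :=
      Finset.le_sup' fhat (Finset.mem_compl.mpr ha)
    have h2 : s.inf' hsne fhat ≤ fhat b := Finset.inf'_le fhat hb
    linarith
  have hgm := isoreg_perturb_mono fhat hmono s hs t hcross
  have hineq := hmin _ hgm
  rw [isoreg_perturb_sum y fhat s t] at hineq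
  have h2 : 0 ≤ -(2*t) * T + t^2 * (s.card : ℝ) := by linarith
  have h1 : T ≤ t * (s.card : ℝ) := (div_le_iff₀ hc).mp htge
  nlinarith [mul_pos (neg_pos.mpr htneg) (neg_pos.mpr h),
    mul_nonneg (neg_nonneg.mpr htneg.le) (by linarith : (0:ℝ) ≤ t * (s.card : ℝ) - T)]

/-- Splitting a sum over `Ici i` at `j`. -/
private lemma isoreg_split {n : ℕ} (f : Fin n → ℝ) {i j : Fin n} (hij : i ≤ j) :
    ∑ l ∈ Finset.Icc i j, f l
      = ∑ l ∈ Finset.Ici i, f l - ∑ l ∈ Finset.Ioi j, f l := by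
  have hunion : Finset.Icc i j ∪ Finset.Ioi j = Finset.Ici i := by
    ext l
    simp only [Finset.mem_union, Finset.mem_Icc, Finset.mem_Ioi, Finset.mem_Ici]
    constructor
    · rintro (⟨h1, _⟩ | h1)
      · exact h1
      · exact le_trans hij (le_of_lt h1)
    · intro h1
      rcases le_or_gt l j with h2 | h2
      · exact Or.inl ⟨h1, h2⟩
      · exact Or.inr h2
  have hdis : Disjoint (Finset.Icc i j) (Finset.Ioi j) := by
    rw [Finset.disjoint_left]
    intro l hl hl'
    exact absurd (Finset.mem_Icc.mp hl).2 (not_le.mpr (Finset.mem_Ioi.mp hl'))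
  rw [← hunion, Finset.sum_union hdis]
  ring

/-- Max–min formula for isotonic least squares regression: if `f̂` minimizes
`∑ (y_i − f_i)²` over nondecreasing vectors `f ∈ ℝⁿ`, then for every `k`,
`f̂ k = max_{i ≤ k} min_{j ≥ k} (average of y over {i, …, j})`. -/
theorem isotonic_lse_maxmin (n : ℕ) (y fhat : Fin n → ℝ)
    (hmono : Monotone fhat)
    (hmin : ∀ g : Fin n → ℝ, Monotone g →
      ∑ i, (y i - fhat i) ^ 2 ≤ ∑ i, (y i - g i) ^ 2)
    (k : Fin n) :
    fhat k =
      (Finset.Iic k).sup' ⟨k, Finset.mem_Iic.mpr le_rfl⟩ (fun i =>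
        (Finset.Ici k).inf' ⟨k, Finset.mem_Ici.mpr le_rfl⟩ (fun j =>
          (∑ l ∈ Finset.Icc i j, y l) / ((Finset.Icc i j).card : ℝ))) := by
  have upIci : ∀ m : Fin n, ∀ ⦃a b : Fin n⦄, a ∈ Finset.Ici m → a ≤ b → b ∈ Finset.Ici m := by
    intro m a b ha hab
    exact Finset.mem_Ici.mpr (le_trans (Finset.mem_Ici.mp ha) hab)
  have upIoi : ∀ m : Fin n, ∀ ⦃a b : Fin n⦄, a ∈ Finset.Ioi m → a ≤ b → b ∈ Finset.Ioi m := by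
    intro m a b ha hab
    exact Finset.mem_Ioi.mpr (lt_of_lt_of_le (Finset.mem_Ioi.mp ha) hab)
  apply le_antisymm
  · -- fhat k ≤ max-min, witness i = a = start of block of k
    set A := (Finset.Iic k).filter (fun i => fhat i = fhat k) with hA
    have hkA : k ∈ A := by
      rw [hA, Finset.mem_filter]
      exact ⟨Finset.mem_Iic.mpr le_rfl, rfl⟩
    set a := A.min' ⟨k, hkA⟩ with ha
    have haA : a ∈ A := Finset.min'_mem _ _
    have hak : a ≤ k := Finset.mem_Iic.mp (Finset.mem_filter.mp haA).1
    have hfa : fhat a = fhat k := (Finset.mem_filter.mp haA).2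
    refine le_trans ?_ (Finset.le_sup' _ (Finset.mem_Iic.mpr hak))
    apply Finset.le_inf'
    intro j hj
    have hkj : k ≤ j := Finset.mem_Ici.mp hj
    have haj : a ≤ j := le_trans hak hkj
    -- residual sum over Icc a j is nonnegative
    have hlt : ∀ l ∉ Finset.Ici a, ∀ m ∈ Finset.Ici a, fhat l < fhat m := by
      intro l hl m hm
      have hla : l < a := not_le.mp (fun h => hl (Finset.mem_Ici.mpr h))
      have h1 : fhat l ≤ fhat a := hmono hla.le
      have h2 : fhat l ≠ fhat a := by
        intro heq
        have hlA : l ∈ A := by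
          rw [hA, Finset.mem_filter]
          exact ⟨Finset.mem_Iic.mpr (le_trans hla.le hak), heq.symm ▸ hfa⟩
        exact absurd (Finset.min'_le A l hlA) (not_le.mpr hla)
      exact lt_of_lt_of_le (lt_of_le_of_ne h1 h2) (hmono (Finset.mem_Ici.mp hm))
    have h1 : 0 ≤ ∑ l ∈ Finset.Icc a j, (y l - fhat l) := by
      rw [isoreg_split _ haj]
      have h2 := isoreg_key_ge y fhat hmono hmin (Finset.Ici a) (upIci a) hlt
      have h3 := isoreg_key_le y fhat hmono hmin (Finset.Ioi j) (upIoi j)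
      linarith
    have hne : (Finset.Icc a j).Nonempty := ⟨a, Finset.mem_Icc.mpr ⟨le_rfl, haj⟩⟩
    have hcard : (0:ℝ) < ((Finset.Icc a j).card : ℝ) := by
      exact_mod_cast Finset.card_pos.mpr hne
    rw [le_div_iff₀ hcard]
    have h4 : (Finset.Icc a j).card • fhat k ≤ ∑ l ∈ Finset.Icc a j, fhat l :=
      Finset.card_nsmul_le_sum _ _ _ (fun l hl => by
        rw [← hfa]; exact hmono (Finset.mem_Icc.mp hl).1)
    rw [nsmul_eq_mul] at h4
    have h5 : ∑ l ∈ Finset.Icc a j, (y l - fhat l)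
        = ∑ l ∈ Finset.Icc a j, y l - ∑ l ∈ Finset.Icc a j, fhat l :=
      Finset.sum_sub_distrib _ _
    linarith
  · -- max-min ≤ fhat k, witness j = b = end of block of k
    apply Finset.sup'_le
    intro i hi
    have hik : i ≤ k := Finset.mem_Iic.mp hi
    set B := (Finset.Ici k).filter (fun j => fhat j = fhat k) with hB
    have hkB : k ∈ B := by
      rw [hB, Finset.mem_filter]
      exact ⟨Finset.mem_Ici.mpr le_rfl, rfl⟩
    set b := B.max' ⟨k, hkB⟩ with hb
    have hbB : b ∈ B := Finset.max'_mem _ _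
    have hkb : k ≤ b := Finset.mem_Ici.mp (Finset.mem_filter.mp hbB).1
    have hfb : fhat b = fhat k := (Finset.mem_filter.mp hbB).2
    refine le_trans (Finset.inf'_le _ (Finset.mem_Ici.mpr hkb)) ?_
    have hib : i ≤ b := le_trans hik hkb
    have hlt : ∀ l ∉ Finset.Ioi b, ∀ m ∈ Finset.Ioi b, fhat l < fhat m := by
      intro l hl m hm
      have hlb : l ≤ b := not_lt.mp (fun h => hl (Finset.mem_Ioi.mpr h))
      have hbm : b < m := Finset.mem_Ioi.mp hm
      have h1 : fhat b ≤ fhat m := hmono hbm.le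
      have h2 : fhat b ≠ fhat m := by
        intro heq
        have hmB : m ∈ B := by
          rw [hB, Finset.mem_filter]
          exact ⟨Finset.mem_Ici.mpr (le_trans hkb hbm.le), heq ▸ hfb⟩
        exact absurd (Finset.le_max' B m hmB) (not_le.mpr hbm)
      exact lt_of_le_of_lt (hmono hlb) (lt_of_le_of_ne h1 h2)
    have h1 : ∑ l ∈ Finset.Icc i b, (y l - fhat l) ≤ 0 := by
      rw [isoreg_split _ hib]
      have h2 := isoreg_key_le y fhat hmono hmin (Finset.Ici i) (upIci i)
      have h3 := isoreg_key_ge y fhat hmono hmin (Finset.Ioi b) (upIoi b) hlt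
      linarith
    have hne : (Finset.Icc i b).Nonempty := ⟨i, Finset.mem_Icc.mpr ⟨le_rfl, hib⟩⟩
    have hcard : (0:ℝ) < ((Finset.Icc i b).card : ℝ) := by
      exact_mod_cast Finset.card_pos.mpr hne
    rw [div_le_iff₀ hcard]
    have h4 : ∑ l ∈ Finset.Icc i b, fhat l ≤ (Finset.Icc i b).card • fhat k :=
      Finset.sum_le_card_nsmul _ _ _ (fun l hl => by
        rw [← hfb]; exact hmono (Finset.mem_Icc.mp hl).2)
    rw [nsmul_eq_mul] at h4
    have h5 : ∑ l ∈ Finset.Icc i b, (y l - fhat l)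
        = ∑ l ∈ Finset.Icc i b, y l - ∑ l ∈ Finset.Icc i b, fhat l :=
      Finset.sum_sub_distrib _ _
    linarith
end
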